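/- Let H ⊆ ℝ^{n+1} and let p₁, …, p_m ∈ ℝ^{n+1} be points such that H is a cone with vertex p_j for every j = 1, …, m. Let V be the linear span of {p_j − p₁ : j = 1, …, m}. Then {x + v : x ∈ H} = H for every v ∈ V, and moreover H is a cone with vertex p₁ + v for every v ∈ V. -/

import Mathlib

/-- A set `H` is a cone with vertex `p` if for every `λ > 0`,
`{p + λ • (x - p) : x ∈ H} = H`. -/
def IsConeWithVertex {E : Type*} [AddCommGroup E] [Module ℝ E] (H : Set E) (p : E) : Prop :=
  ∀ l : ℝ, 0 < l → (fun x => p + l • (x - p)) '' H = H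

lemma trans_add_aux {E : Type*} [AddCommGroup E] (H : Set E) (a b : E)
    (ha : (fun x => x + a) '' H = H) (hb : (fun x => x + b) '' H = H) :
    (fun x => x + (a + b)) '' H = H := by
  have h : (fun x : E => x + (a + b)) = (fun x => x + b) ∘ (fun x => x + a) := by
    funext x; simp [add_assoc]
  rw [h, Set.image_comp, ha, hb]

lemma cone_pair_trans {E : Type*} [AddCommGroup E] [Module ℝ E] (H : Set E) (p q : E)
    (hp : IsConeWithVertex H p) (hq : IsConeWithVertex H q) (t : ℝ) :
    (fun x => x + t • (q - p)) '' H = H := by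
  have step1 : ∀ t : ℝ, -1 < t → (fun x => x + t • (q - p)) '' H = H := by
    intro t ht
    have hl : (0:ℝ) < t + 1 := by linarith
    have h1 := hq (1/(t+1)) (by positivity)
    have h2 := hp (t+1) hl
    have comp : (fun x => x + t • (q - p)) =
        (fun x => p + (t+1) • (x - p)) ∘ (fun x => q + (1/(t+1)) • (x - q)) := by
      funext x
      simp only [Function.comp]
      match_scalars <;> field_simp <;> ring
    rw [comp, Set.image_comp, h1, h2]
  have step2 : ∀ (k : ℕ) (s : ℝ), -1 < s → s < 1 →
      (fun x => x + ((k : ℝ) * s) • (q - p)) '' H = H := by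
    intro k
    induction k with
    | zero => intro s _ _; simp
    | succ k ih =>
      intro s h1 h2
      have h := trans_add_aux H _ _ (ih s h1 h2) (step1 s h1)
      have : (((k : ℝ) + 1) * s) • (q - p) = ((k : ℝ) * s) • (q - p) + s • (q - p) := by
        rw [← add_smul]; ring_nf
      rw [Nat.cast_succ, this]
      exact h
  rcases eq_or_ne t 0 with rfl | ht0
  · simp
  · set k : ℕ := ⌈|t|⌉₊ + 1 with hk
    have hkt : |t| < (k : ℕ) := lt_of_le_of_lt (Nat.le_ceil _) (by exact_mod_cast Nat.lt_succ_self _)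
    have hk0 : (0:ℝ) < k := lt_of_le_of_lt (abs_nonneg t) hkt
    have hs : |t / k| < 1 := by
      rw [abs_div, abs_of_pos hk0, div_lt_one hk0]; exact hkt
    have hs1 := abs_lt.mp hs
    have := step2 k (t / k) hs1.1 hs1.2
    rwa [mul_div_cancel₀ _ (ne_of_gt hk0)] at this

/-- Lemma 3.15 (Linear Auto-Alignments): if `H ⊆ ℝ^{n+1}` is a cone with vertex `p j`
for every `j`, and `V` is the linear span of the differences `p j - p 0`, then `H` is
invariant under translation by every `v ∈ V`, and `H` is a cone with vertex `p 0 + v`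
for every `v ∈ V`. -/
theorem cone_multi_vertices_translation_invariant (n m : ℕ) (hm : 0 < m)
    (H : Set (EuclideanSpace ℝ (Fin (n + 1))))
    (p : Fin m → EuclideanSpace ℝ (Fin (n + 1)))
    (hcone : ∀ j, IsConeWithVertex H (p j)) :
    ∀ v ∈ Submodule.span ℝ (Set.range fun j => p j - p ⟨0, hm⟩),
      (fun x => x + v) '' H = H ∧ IsConeWithVertex H (p ⟨0, hm⟩ + v) := by
  set p0 := p ⟨0, hm⟩ with hp0
  have key : ∀ v ∈ Submodule.span ℝ (Set.range fun j => p j - p0),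
      ∀ t : ℝ, (fun x => x + t • v) '' H = H := by
    intro v hv
    induction hv using Submodule.span_induction with
    | mem x hx =>
      obtain ⟨j, rfl⟩ := hx
      intro t
      exact cone_pair_trans H p0 (p j) (hcone _) (hcone j) t
    | zero => intro t; simp
    | add x y hx hy ihx ihy =>
      intro t
      rw [smul_add]
      exact trans_add_aux H _ _ (ihx t) (ihy t)
    | smul c x hx ihx =>
      intro t
      rw [smul_smul]
      exact ihx (t * c)
  intro v hv
  have hT : ∀ t : ℝ, (fun x => x + t • v) '' H = H := key v hv
  refine ⟨by simpa using hT 1, ?_⟩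
  intro l hl
  have h0 := hcone ⟨0, hm⟩ l hl
  have comp : (fun x => p0 + v + l • (x - (p0 + v))) =
      (fun x => x + (1 - l) • v) ∘ (fun x => p0 + l • (x - p0)) := by
    funext x
    simp only [Function.comp]
    match_scalars <;> ring
  rw [comp, Set.image_comp]
  rw [show (fun x => p0 + l • (x - p0)) '' H = H from h0, hT (1 - l)]
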